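/- The 1-DFLP-CCD with loyal customers reduces to a maximum-weight assignment problem: the optimal total reward equals the maximum over injective assignments σ of distinct locations to time periods of ∑_t ρ(σ(t), t), where ρ(i,t) = r_i ∑_{j ∈ J(i)} ∑_{s ≤ t} d^s_j. -/

import Mathlib

/-- `capB Jset sched j s` : whether customer `j` is captured at period `s` under the
single-facility schedule `sched`. -/
def capB {I C : Type*} [DecidableEq C] (Jset : I → Finset C)
    (sched : ℕ → Option I) (j : C) (s : ℕ) : Bool :=
  match sched s with
  | none => false
  | some i => decide (j ∈ Jset i)

/-- Previous-capture time `τ(j,t)`. -/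
def prevCap {I C : Type*} [DecidableEq C] (Jset : I → Finset C)
    (sched : ℕ → Option I) (j : C) (t : ℕ) : ℕ :=
  ((Finset.Ico 1 t).filter (fun s => capB Jset sched j s = true)).sup id

/-- Total reward of a single-facility schedule with spread factor 1. -/
def reward {I C : Type*} [DecidableEq C] (T : ℕ) (Jset : I → Finset C)
    (r : I → ℝ) (d : ℕ → C → ℝ) (sched : ℕ → Option I) : ℝ :=
  ∑ t ∈ Finset.Icc 1 T, ((sched t).elim 0 (fun i =>
    r i * ∑ j ∈ Jset i, ∑ s ∈ Finset.Icc (prevCap Jset sched j t + 1) t, d s j))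

lemma tele (g : ℕ → ℝ) : ∀ S : Finset ℕ, 0 ∉ S →
    ∑ t ∈ S, ∑ s ∈ Finset.Icc ((S.filter (· < t)).sup id + 1) t, g s
      = ∑ s ∈ Finset.Icc 1 (S.sup id), g s := by
  intro S
  induction S using Finset.strongInduction with
  | _ S ih =>
    intro h0
    rcases S.eq_empty_or_nonempty with rfl | hS
    · simp
    · set M := S.max' hS with hM
      have hMS : M ∈ S := S.max'_mem hS
      have hsup : S.sup id = M :=
        le_antisymm (Finset.sup_le fun b hb => S.le_max' b hb) (Finset.le_sup (f := id) hMS)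
      have hMpos : 1 ≤ M := Nat.one_le_iff_ne_zero.mpr (by intro hM0; rw [hM0] at hMS; exact h0 hMS)
      set S' := S.erase M with hS'
      have hlt : ∀ t ∈ S', t < M := fun t ht =>
        lt_of_le_of_ne (S.le_max' t (Finset.mem_of_mem_erase ht)) (Finset.ne_of_mem_erase ht)
      have hfiltM : S.filter (· < M) = S' := by
        ext s
        simp only [Finset.mem_filter, hS', Finset.mem_erase]
        constructor
        · rintro ⟨hs, hlt'⟩; exact ⟨Nat.ne_of_lt hlt', hs⟩
        · rintro ⟨hne, hs⟩; exact ⟨hs, lt_of_le_of_ne (S.le_max' s hs) hne⟩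
      have key : ∀ t ∈ S', S.filter (· < t) = S'.filter (· < t) := by
        intro t ht
        ext s
        simp only [Finset.mem_filter, hS', Finset.mem_erase]
        constructor
        · rintro ⟨hs, h1⟩; exact ⟨⟨Nat.ne_of_lt (h1.trans (hlt t ht)), hs⟩, h1⟩
        · rintro ⟨⟨_, hs⟩, h1⟩; exact ⟨hs, h1⟩
      have hM'le : S'.sup id ≤ M := Finset.sup_le fun b hb => le_of_lt (hlt b hb)
      rw [← Finset.sum_erase_add S _ hMS, ← hS', hfiltM]
      rw [Finset.sum_congr rfl (fun t ht => by rw [key t ht])]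
      rw [ih S' (Finset.erase_ssubset hMS) (fun h => h0 (Finset.mem_of_mem_erase h))]
      rw [hsup]
      rw [show (1 : ℕ) = 0 + 1 from rfl, Finset.Icc_add_one_left_eq_Ioc, Finset.Icc_add_one_left_eq_Ioc, zero_add, Finset.Icc_add_one_left_eq_Ioc]
      exact Finset.sum_Ioc_consecutive g (Nat.zero_le _) hM'le

theorem stmt_5 {I C : Type*} [Fintype I] [DecidableEq C] (T : ℕ)
    (Jset : I → Finset C)
    (hdisj : ∀ i k : I, i ≠ k → Disjoint (Jset i) (Jset k))
    (r : I → ℝ) (hr : ∀ i, 0 ≤ r i) (d : ℕ → C → ℝ) (hd : ∀ s j, 0 ≤ d s j) :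
    sSup {x : ℝ | ∃ sched : ℕ → Option I, x = reward T Jset r d sched} =
    sSup {x : ℝ | ∃ σ : ℕ → Option I,
      (∀ t ∈ Finset.Icc 1 T, ∀ t' ∈ Finset.Icc 1 T, ∀ i : I,
        σ t = some i → σ t' = some i → t = t') ∧
      x = ∑ t ∈ Finset.Icc 1 T, ((σ t).elim 0 (fun i =>
        r i * ∑ j ∈ Jset i, ∑ s ∈ Finset.Icc 1 t, d s j))} := by
  classical
  congr 1
  ext x
  simp only [Set.mem_setOf_eq]
  constructor
  · -- hard direction: schedule → injective assignment
    rintro ⟨sched, rfl⟩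
    set S : I → Finset ℕ := fun i => (Finset.Icc 1 T).filter (fun t => sched t = some i)
      with hSdef
    set σ : ℕ → Option I := fun t => (sched t).bind (fun i =>
      if t ∈ Finset.Icc 1 T ∧ (S i).sup id = t then some i else none) with hσdef
    have hσ_elim : ∀ t i, σ t = some i →
        sched t = some i ∧ t ∈ Finset.Icc 1 T ∧ (S i).sup id = t := by
      intro t i h
      have h' : (sched t).bind (fun i => if t ∈ Finset.Icc 1 T ∧ (S i).sup id = t
          then some i else none) = some i := h
      cases hs : sched t with
      | none => rw [hs] at h'; simp at h'
      | some i' =>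
        rw [hs] at h'
        simp only [Option.bind_some] at h'
        split_ifs at h' with hc
        · obtain rfl : i' = i := Option.some.inj h'
          exact ⟨rfl, hc.1, hc.2⟩
    refine ⟨σ, ?_, ?_⟩
    · intro t ht t' ht' i h h'
      have h1 := (hσ_elim t i h).2.2
      have h2 := (hσ_elim t' i h').2.2
      omega
    · -- value equality
      -- 0 ∉ S i
      have h0S : ∀ i, 0 ∉ S i := by
        intro i h
        have := (Finset.mem_filter.mp h).1
        simp at this
      have hMmem : ∀ i, (S i).Nonempty → (S i).sup id ∈ S i := by
        intro i hne
        have h1 : (S i).max' hne = (S i).sup' hne id := rfl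
        have h2 : (S i).sup' hne id = (S i).sup id := Finset.sup'_eq_sup hne id
        have := (S i).max'_mem hne
        rwa [h1, h2] at this
      -- σ applied at sup, when nonempty
      have hσsup : ∀ i, (S i).Nonempty → σ ((S i).sup id) = some i := by
        intro i hne
        have hmem := hMmem i hne
        have hsched : sched ((S i).sup id) = some i := (Finset.mem_filter.mp hmem).2
        have hIcc : (S i).sup id ∈ Finset.Icc 1 T := (Finset.mem_filter.mp hmem).1
        show (sched ((S i).sup id)).bind (fun i' =>
          if (S i).sup id ∈ Finset.Icc 1 T ∧ (S i').sup id = (S i).sup id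
          then some i' else none) = some i
        rw [hsched, Option.bind_some, if_pos ⟨hIcc, rfl⟩]
      -- T_i = filter (σ = some i)
      set Tset : I → Finset ℕ := fun i => (Finset.Icc 1 T).filter (fun t => σ t = some i)
        with hTdef
      have hTset : ∀ i, Tset i = if h : (S i).Nonempty then {(S i).sup id} else ∅ := by
        intro i
        split_ifs with hne
        · ext t
          simp only [hTdef, Finset.mem_filter, Finset.mem_singleton]
          constructor
          · rintro ⟨_, hσt⟩
            exact ((hσ_elim t i hσt).2.2).symm
          · rintro rfl
            exact ⟨(Finset.mem_filter.mp (hMmem i hne)).1, hσsup i hne⟩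
        · ext t
          simp only [hTdef, Finset.mem_filter, Finset.notMem_empty, iff_false]
          rintro ⟨_, hσt⟩
          obtain ⟨hsched, hIcc, _⟩ := hσ_elim t i hσt
          exact absurd ⟨t, Finset.mem_filter.mpr ⟨hIcc, hsched⟩⟩ hne
      -- prevCap identification
      have hprev : ∀ i, ∀ t ∈ S i, ∀ j ∈ Jset i,
          prevCap Jset sched j t = ((S i).filter (· < t)).sup id := by
        intro i t ht j hj
        unfold prevCap
        congr 1
        ext s
        simp only [Finset.mem_filter, Finset.mem_Ico]
        have htT : t ≤ T := (Finset.mem_Icc.mp (Finset.mem_filter.mp ht).1).2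
        constructor
        · rintro ⟨⟨h1, h2⟩, hcap⟩
          unfold capB at hcap
          cases hs : sched s with
          | none => rw [hs] at hcap; simp at hcap
          | some i' =>
            rw [hs] at hcap
            simp only [decide_eq_true_eq] at hcap
            have hii : i' = i := by
              by_contra hne'
              exact (Finset.disjoint_left.mp (hdisj i' i hne') hcap) hj
            refine ⟨Finset.mem_filter.mpr ⟨Finset.mem_Icc.mpr ⟨h1, by omega⟩, by rw [hs, hii]⟩, h2⟩
        · rintro ⟨hsS, hlt'⟩
          obtain ⟨hsIcc, hsched⟩ := Finset.mem_filter.mp hsS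
          refine ⟨⟨(Finset.mem_Icc.mp hsIcc).1, hlt'⟩, ?_⟩
          unfold capB
          rw [hsched]
          simp [hj]
      -- grouping : rewrite both sides as sums over i
      have grp : ∀ (f : ℕ → Option I) (G : I → ℕ → ℝ),
          ∑ t ∈ Finset.Icc 1 T, ((f t).elim 0 (fun i => G i t))
            = ∑ i : I, ∑ t ∈ (Finset.Icc 1 T).filter (fun t => f t = some i), G i t := by
        intro f G
        have step : ∀ t ∈ Finset.Icc 1 T, ((f t).elim 0 (fun i => G i t))
            = ∑ i : I, if f t = some i then G i t else 0 := by
          intro t _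
          cases hs : f t with
          | none => simp
          | some i₀ =>
            simp only [Option.elim, Option.some.injEq]
            rw [Finset.sum_ite_eq]
            simp
        rw [Finset.sum_congr rfl step, Finset.sum_comm]
        exact Finset.sum_congr rfl fun i _ => (Finset.sum_filter _ _).symm
      unfold reward
      rw [grp sched (fun i t =>
        r i * ∑ j ∈ Jset i, ∑ s ∈ Finset.Icc (prevCap Jset sched j t + 1) t, d s j)]
      rw [grp σ (fun i t => r i * ∑ j ∈ Jset i, ∑ s ∈ Finset.Icc 1 t, d s j)]
      refine Finset.sum_congr rfl fun i _ => ?_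
      rw [show (Finset.Icc 1 T).filter (fun t => σ t = some i) = Tset i from rfl, hTset i]
      split_ifs with hne
      · -- nonempty case
        rw [Finset.sum_singleton]
        rw [show (Finset.Icc 1 T).filter (fun t => sched t = some i) = S i from rfl]
        simp only [Finset.mul_sum]
        rw [Finset.sum_congr rfl (fun t ht => Finset.sum_congr rfl fun j hj => by
          rw [hprev i t ht j hj])]
        rw [Finset.sum_comm]
        refine Finset.sum_congr rfl fun j _ => ?_
        exact tele (fun s => r i * d s j) (S i) (h0S i)
      · -- empty case : S i = ∅
        rw [Finset.not_nonempty_iff_eq_empty] at hne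
        rw [show (Finset.Icc 1 T).filter (fun t => sched t = some i) = S i from rfl, hne]
        simp
  · -- easy direction : injective assignment is a schedule with same reward
    rintro ⟨σ, hinj, rfl⟩
    refine ⟨σ, ?_⟩
    unfold reward
    refine Finset.sum_congr rfl fun t ht => ?_
    cases hs : σ t with
    | none => simp
    | some i =>
      simp only [Option.elim]
      congr 1
      refine Finset.sum_congr rfl fun j hj => ?_
      have hzero : prevCap Jset σ j t = 0 := by
        unfold prevCap
        have : (Finset.Ico 1 t).filter (fun s => capB Jset σ j s = true) = ∅ := by
          rw [Finset.filter_eq_empty_iff]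
          intro s hs'
          obtain ⟨h1, h2⟩ := Finset.mem_Ico.mp hs'
          intro hcap
          unfold capB at hcap
          cases hss : σ s with
          | none => rw [hss] at hcap; simp at hcap
          | some i' =>
            rw [hss] at hcap
            simp only [decide_eq_true_eq] at hcap
            have hii : i' = i := by
              by_contra hne'
              exact (Finset.disjoint_left.mp (hdisj i' i hne') hcap) hj
            rw [hii] at hss
            have htT : t ≤ T := (Finset.mem_Icc.mp ht).2
            have hsIcc : s ∈ Finset.Icc 1 T := Finset.mem_Icc.mpr ⟨h1, by omega⟩
            have := hinj s hsIcc t ht i hss hs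
            omega
        rw [this]
        simp
      rw [hzero]
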